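/- Let a, w, b, a', w', b' be elements of the free monoid on an alphabet α with w ≠ 1 and w' ≠ 1. If the intersection a⟨w⟩b ∩ a'⟨w'⟩b' is infinite, then there exist integers m, n ≥ 1 and elements u, v of the free monoid such that w^m = u * v and w'^n = v * u (i.e., some positive powers of w and w' are conjugate as words). -/
import Mathlib

/-- The sandwich `a⟨w⟩b = {a * w^n * b : n ∈ ℕ}` in a monoid. -/
def sandwich {S : Type*} [Monoid S] (a w b : S) : Set S :=
  Set.range fun n : ℕ => a * w ^ n * b

private theorem FM.length_pow {α : Type*} (w : FreeMonoid α) (k : ℕ) :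
    (w ^ k).length = k * w.length := by
  induction k with
  | zero => simp [pow_zero]
  | succ k ih => rw [pow_succ, FreeMonoid.length_mul, ih]; ring

/-- key conjugacy lemma on lists, with fuel -/
private theorem conj_aux {α : Type*} :
    ∀ N : ℕ, ∀ s x y : List α, s.length ≤ N → y ≠ [] → s ++ x = y ++ s →
      ∃ u v : List α, x = u ++ v ∧ y = v ++ u := by
  intro N
  induction N with
  | zero =>
    intro s x y hN hy h
    have : s = [] := List.length_eq_zero_iff.mp (Nat.le_zero.mp hN)
    subst this
    simp at h
    exact ⟨x, [], by simp, by simp [h]⟩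
  | succ N ih =>
    intro s x y hN hy h
    rcases le_or_gt y.length s.length with hle | hlt
    · -- y is a prefix of s
      have h1 : y <+: s ++ x := h ▸ List.prefix_append y s
      have hyp : y <+: s := List.prefix_of_prefix_length_le h1 (List.prefix_append s x) hle
      obtain ⟨s', rfl⟩ := hyp
      have hlen : s'.length ≤ N := by
        have hy' : 0 < y.length := List.length_pos_iff.mpr hy
        have := hN
        rw [List.length_append] at this
        omega
      have h' : s' ++ x = y ++ s' := by
        rw [List.append_assoc] at h
        exact List.append_cancel_left h
      exact ih s' x y hlen hy h'
    · -- s is a proper prefix of y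
      have h1 : s <+: y ++ s := ⟨x, h⟩
      have hsp : s <+: y := List.prefix_of_prefix_length_le h1 (List.prefix_append y s) hlt.le
      obtain ⟨t, rfl⟩ := hsp
      refine ⟨t, s, ?_, rfl⟩
      rw [List.append_assoc] at h
      exact List.append_cancel_left h

private theorem conj_of_comm {α : Type*} (s x y : List α) (hy : y ≠ [])
    (h : s ++ x = y ++ s) : ∃ u v : List α, x = u ++ v ∧ y = v ++ u :=
  conj_aux s.length s x y le_rfl hy h

private theorem ne_one_toList_pow {α : Type*} {w' : FreeMonoid α} (hw' : w' ≠ 1) {n : ℕ}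
    (hn : 1 ≤ n) : (w' ^ n).toList ≠ [] := by
  intro hnil
  apply hw'
  have h0 : (w' ^ n).length = 0 := congrArg List.length hnil
  rw [FM.length_pow] at h0
  have : w'.length = 0 := by
    rcases Nat.mul_eq_zero.mp h0 with h | h
    · omega
    · exact h
  exact FreeMonoid.toList.injective (List.length_eq_zero_iff.mp this)

/-- asymmetric core lemma -/
private theorem core {α : Type*} (a w b a' w' b' : FreeMonoid α) (k l m n : ℕ)
    (hn : 1 ≤ n) (hw' : w' ≠ 1) (hb : b.length ≤ b'.length)
    (h1 : a * w ^ k * b = a' * w' ^ l * b')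
    (h2 : a * w ^ (k + m) * b = a' * w' ^ (l + n) * b') :
    ∃ u v : FreeMonoid α, w ^ m = u * v ∧ w' ^ n = v * u := by
  set P := a * w ^ k with hP
  set Q := a' * w' ^ l with hQ
  have e1 : P.toList ++ b.toList = Q.toList ++ b'.toList := by
    have := congrArg FreeMonoid.toList h1
    simpa [FreeMonoid.toList_mul] using this
  have hlenPQ : Q.toList.length ≤ P.toList.length := by
    have hl := congrArg List.length e1
    rw [List.length_append, List.length_append] at hl
    have hb2 : b.toList.length ≤ b'.toList.length := hb
    omega
  have h1' : Q.toList <+: P.toList ++ b.toList := e1 ▸ List.prefix_append _ _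
  have hQP : Q.toList <+: P.toList :=
    List.prefix_of_prefix_length_le h1' (List.prefix_append _ _) hlenPQ
  obtain ⟨s, hs⟩ := hQP
  have hb'eq : b'.toList = s ++ b.toList := by
    rw [← hs, List.append_assoc] at e1
    exact (List.append_cancel_left e1).symm
  have e2 : s ++ (w ^ m).toList = (w' ^ n).toList ++ s := by
    have h2' := congrArg FreeMonoid.toList h2
    rw [pow_add, pow_add] at h2'
    have e2' : P.toList ++ ((w ^ m).toList ++ b.toList)
        = Q.toList ++ ((w' ^ n).toList ++ b'.toList) := by
      simpa [FreeMonoid.toList_mul, hP, hQ, List.append_assoc, mul_assoc] using h2'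
    rw [← hs, hb'eq] at e2'
    simp only [List.append_assoc] at e2'
    have e3 : s ++ ((w ^ m).toList ++ b.toList)
        = (w' ^ n).toList ++ (s ++ b.toList) := List.append_cancel_left e2'
    have e4 : (s ++ (w ^ m).toList) ++ b.toList
        = ((w' ^ n).toList ++ s) ++ b.toList := by
      simpa [List.append_assoc] using e3
    exact List.append_cancel_right e4
  obtain ⟨u, v, hx, hyy⟩ := conj_of_comm s (w ^ m).toList ((w' ^ n).toList)
    (ne_one_toList_pow hw' hn) e2
  refine ⟨FreeMonoid.ofList u, FreeMonoid.ofList v, ?_, ?_⟩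
  · exact FreeMonoid.toList.injective (by simpa [FreeMonoid.toList_mul] using hx)
  · exact FreeMonoid.toList.injective (by simpa [FreeMonoid.toList_mul] using hyy)

private theorem pair {α : Type*} (a w b a' w' b' : FreeMonoid α)
    (hw : w ≠ 1) (hw' : w' ≠ 1) (k₁ l₁ k₂ l₂ : ℕ) (hk : k₁ < k₂)
    (h1 : a * w ^ k₁ * b = a' * w' ^ l₁ * b')
    (h2 : a * w ^ k₂ * b = a' * w' ^ l₂ * b') :
    ∃ (m n : ℕ), 1 ≤ m ∧ 1 ≤ n ∧
      ∃ u v : FreeMonoid α, w ^ m = u * v ∧ w' ^ n = v * u := by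
  have hwlen : 1 ≤ w.length := by
    rcases Nat.eq_zero_or_pos w.length with h | h
    · exact absurd (FreeMonoid.toList.injective (List.length_eq_zero_iff.mp h)) hw
    · exact h
  have hw'len : 1 ≤ w'.length := by
    rcases Nat.eq_zero_or_pos w'.length with h | h
    · exact absurd (FreeMonoid.toList.injective (List.length_eq_zero_iff.mp h)) hw'
    · exact h
  have len1 : a.length + k₁ * w.length + b.length
      = a'.length + l₁ * w'.length + b'.length := by
    have := congrArg FreeMonoid.length h1
    simpa [FreeMonoid.length_mul, FM.length_pow] using this
  have len2 : a.length + k₂ * w.length + b.length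
      = a'.length + l₂ * w'.length + b'.length := by
    have := congrArg FreeMonoid.length h2
    simpa [FreeMonoid.length_mul, FM.length_pow] using this
  have hkk : k₁ * w.length < k₂ * w.length := (Nat.mul_lt_mul_right hwlen).mpr hk
  have hll' : l₁ * w'.length < l₂ * w'.length := by omega
  have hl : l₁ < l₂ := Nat.lt_of_mul_lt_mul_right hll'
  refine ⟨k₂ - k₁, l₂ - l₁, by omega, by omega, ?_⟩
  have hk2 : k₂ = k₁ + (k₂ - k₁) := by omega
  have hl2 : l₂ = l₁ + (l₂ - l₁) := by omega
  rw [hk2, hl2] at h2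
  rcases le_or_gt b.length b'.length with hb | hb
  · exact core a w b a' w' b' k₁ l₁ _ _ (by omega) hw' hb h1 h2
  · obtain ⟨u, v, h1', h2'⟩ := core a' w' b' a w b l₁ k₁ _ _ (by omega) hw hb.le
      h1.symm h2.symm
    exact ⟨v, u, h2', h1'⟩

theorem sandwich_infinite_inter_conjugate_powers
    {α : Type*} (a w b a' w' b' : FreeMonoid α) (hw : w ≠ 1) (hw' : w' ≠ 1)
    (hinf : (sandwich a w b ∩ sandwich a' w' b').Infinite) :
    ∃ (m n : ℕ), 1 ≤ m ∧ 1 ≤ n ∧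
      ∃ u v : FreeMonoid α, w ^ m = u * v ∧ w' ^ n = v * u := by
  obtain ⟨x, hx, y, hy, hxy⟩ := hinf.nontrivial
  obtain ⟨⟨k₁, hk₁⟩, ⟨l₁, hl₁⟩⟩ := hx
  obtain ⟨⟨k₂, hk₂⟩, ⟨l₂, hl₂⟩⟩ := hy
  simp only at hk₁ hl₁ hk₂ hl₂
  have hkne : k₁ ≠ k₂ := by
    rintro rfl
    exact hxy (hk₁.symm.trans hk₂)
  rcases lt_or_gt_of_ne hkne with hk | hk
  · exact pair a w b a' w' b' hw hw' k₁ l₁ k₂ l₂ hk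
      (hk₁.trans hl₁.symm) (hk₂.trans hl₂.symm)
  · exact pair a w b a' w' b' hw hw' k₂ l₂ k₁ l₁ hk
      (hk₂.trans hl₂.symm) (hk₁.trans hl₁.symm)
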